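/- arXiv:2507.16513 — 7 statements merged into one kernel-verified Lean document; each statement's English description precedes it below -/
import Mathlib

section
/- Let H be a real Hilbert space, R an operator with domain dom(R) ⊆ H mapping into H, and U ⊆ dom(R). Then SRG_U(I + R) = 1 + SRG_U(R), where (I+R)u := u + Ru and 1 + C := { 1 + z : z ∈ C } for C ⊆ ℂ. -/
open ComplexConjugate
open scoped RealInnerProductSpace Pointwise

/-- The point `(‖Δy‖/‖Δu‖)·e^{iθ}` with `θ = arccos(⟨Δu,Δy⟩/(‖Δu‖‖Δy‖)) ∈ [0,π]`
contributed to the SRG by a pair of increments `Δu`, `Δy` (equal to `0` when `Δy = 0`). -/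
noncomputable def srgPoint {H : Type*} [NormedAddCommGroup H] [InnerProductSpace ℝ H]
    (du dy : H) : ℂ :=
  ((‖dy‖ / ‖du‖ : ℝ) : ℂ) *
    Complex.exp (Complex.I * ((Real.arccos (⟪du, dy⟫ / (‖du‖ * ‖dy‖)) : ℝ) : ℂ))

/-- The Scaled Relative Graph of an operator `R` on a real Hilbert space over a set `U` of
inputs; both signs of the angle are included (via complex conjugation). -/
noncomputable def SRG {H : Type*} [NormedAddCommGroup H] [InnerProductSpace ℝ H]
    (R : H → H) (U : Set H) : Set ℂ :=
  { z | ∃ u₁ ∈ U, ∃ u₂ ∈ U, u₁ ≠ u₂ ∧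
      (z = srgPoint (u₁ - u₂) (R u₁ - R u₂) ∨
        z = conj (srgPoint (u₁ - u₂) (R u₁ - R u₂))) }

/-- The Scaled Graph of an operator `R` at the particular input `us`, over a set `U` of inputs. -/
noncomputable def SG {H : Type*} [NormedAddCommGroup H] [InnerProductSpace ℝ H]
    (R : H → H) (U : Set H) (us : H) : Set ℂ :=
  { z | ∃ u ∈ U, u ≠ us ∧
      (z = srgPoint (u - us) (R u - R us) ∨
        z = conj (srgPoint (u - us) (R u - R us))) }

/-- A set `C ⊆ ℂ` satisfies the chord property if for every `z ∈ C` the segment `[z, z̄]`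
is contained in `C`. -/
def ChordProperty (C : Set ℂ) : Prop :=
  ∀ z ∈ C, ∀ α ∈ Set.Icc (0 : ℝ) 1, (α : ℂ) * z + ((1 - α : ℝ) : ℂ) * conj z ∈ C

/-- The right-hand arc `Arc⁺(z, z̄) = { r e^{i(1−2α)φ} : α ∈ [0,1] }`, where `z = r e^{iφ}`
with `φ = arg z ∈ (−π, π]`. -/
noncomputable def arcPlus (z : ℂ) : Set ℂ :=
  { w | ∃ α ∈ Set.Icc (0 : ℝ) 1,
      w = ((‖z‖ : ℝ) : ℂ) *
        Complex.exp (Complex.I * (((1 - 2 * α) * Complex.arg z : ℝ) : ℂ)) }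

/-- The left-hand arc `Arc⁻(z, z̄) = −Arc⁺(−z, −z̄)`. -/
noncomputable def arcMinus (z : ℂ) : Set ℂ := (fun w => -w) '' arcPlus (-z)

/-- `C` satisfies the right-arc property if `Arc⁺(z,z̄) ⊆ C` for all `z ∈ C`. -/
def RightArcProperty (C : Set ℂ) : Prop := ∀ z ∈ C, arcPlus z ⊆ C

/-- `C` satisfies the left-arc property if `Arc⁻(z,z̄) ⊆ C` for all `z ∈ C`. -/
def LeftArcProperty (C : Set ℂ) : Prop := ∀ z ∈ C, arcMinus z ⊆ C

/-- `C` satisfies an arc property if it satisfies the left-arc or the right-arc property. -/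
def ArcProperty (C : Set ℂ) : Prop := LeftArcProperty C ∨ RightArcProperty C


lemma srgPoint_formula' {H : Type*} [NormedAddCommGroup H] [InnerProductSpace ℝ H]
    (du dy : H) (hdu : du ≠ 0) :
    (((‖dy‖ / ‖du‖ : ℝ) : ℂ) *
      Complex.exp (Complex.I * ((Real.arccos (⟪du, dy⟫ / (‖du‖ * ‖dy‖)) : ℝ) : ℂ))) =
    ((⟪du, dy⟫ / ‖du‖ ^ 2 : ℝ) : ℂ) +
      ((Real.sqrt (‖du‖ ^ 2 * ‖dy‖ ^ 2 - ⟪du, dy⟫ ^ 2) / ‖du‖ ^ 2 : ℝ) : ℂ) * Complex.I := by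
  have ha : (0:ℝ) < ‖du‖ := norm_pos_iff.mpr hdu
  by_cases hdy : dy = 0
  · simp [hdy, ha.ne']
  · have hb : (0:ℝ) < ‖dy‖ := norm_pos_iff.mpr hdy
    set a := ‖du‖
    set b := ‖dy‖
    set p := ⟪du, dy⟫
    have hcs : |p| ≤ a * b := abs_real_inner_le_norm du dy
    have ht1 : -1 ≤ p / (a * b) := by
      rw [le_div_iff₀ (by positivity)]
      nlinarith [abs_le.mp hcs]
    have ht2 : p / (a * b) ≤ 1 := by
      rw [div_le_one (by positivity)]
      nlinarith [abs_le.mp hcs]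
    rw [mul_comm Complex.I, Complex.exp_mul_I]
    rw [show ((Real.arccos (p / (a*b)) : ℝ) : ℂ) = ((Real.arccos (p / (a*b)) : ℝ) : ℂ) from rfl]
    rw [← Complex.ofReal_cos, ← Complex.ofReal_sin,
      Real.cos_arccos ht1 ht2, Real.sin_arccos]
    have hsq : Real.sqrt (1 - (p / (a*b))^2) = Real.sqrt (a^2*b^2 - p^2) / (a*b) := by
      have hnn : (0:ℝ) ≤ a^2*b^2 - p^2 := by nlinarith [abs_le.mp hcs]
      rw [show 1 - (p/(a*b))^2 = (a^2*b^2 - p^2)/(a*b)^2 by field_simp,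
        Real.sqrt_div hnn, Real.sqrt_sq (by positivity)]
    rw [hsq]
    push_cast
    have haC : (a:ℂ) ≠ 0 := by exact_mod_cast ha.ne'
    have hbC : (b:ℂ) ≠ 0 := by exact_mod_cast hb.ne'
    have h1 : (b:ℂ) / a * (p / (a*b)) = p / a^2 := by
      field_simp
    have h2 : (b:ℂ) / a * (Real.sqrt (a^2*b^2 - p^2) / (a*b)) = Real.sqrt (a^2*b^2 - p^2) / a^2 := by
      field_simp
    rw [mul_add, ← mul_assoc, h1, h2]

lemma srgPoint_formula {H : Type*} [NormedAddCommGroup H] [InnerProductSpace ℝ H]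
    (du dy : H) (hdu : du ≠ 0) :
    srgPoint du dy = ((⟪du, dy⟫ / ‖du‖ ^ 2 : ℝ) : ℂ) +
      ((Real.sqrt (‖du‖ ^ 2 * ‖dy‖ ^ 2 - ⟪du, dy⟫ ^ 2) / ‖du‖ ^ 2 : ℝ) : ℂ) * Complex.I :=
  srgPoint_formula' du dy hdu

lemma srgPoint_add {H : Type*} [NormedAddCommGroup H] [InnerProductSpace ℝ H]
    (du dy : H) (hdu : du ≠ 0) :
    srgPoint du (du + dy) = 1 + srgPoint du dy := by
  rw [srgPoint_formula du dy hdu, srgPoint_formula du (du + dy) hdu]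
  have ha2 : (‖du‖ : ℝ) ^ 2 ≠ 0 := pow_ne_zero 2 (norm_ne_zero_iff.mpr hdu)
  have h1 : ⟪du, du + dy⟫ = ‖du‖ ^ 2 + ⟪du, dy⟫ := by
    rw [inner_add_right, real_inner_self_eq_norm_sq]
  have h2 : ‖du + dy‖ ^ 2 = ‖du‖ ^ 2 + 2 * ⟪du, dy⟫ + ‖dy‖ ^ 2 := norm_add_sq_real du dy
  rw [h1, h2,
    show ‖du‖^2*(‖du‖^2+2*⟪du,dy⟫+‖dy‖^2) - (‖du‖^2+⟪du,dy⟫)^2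
        = ‖du‖^2*‖dy‖^2 - ⟪du,dy⟫^2 by ring,
    show ((‖du‖^2 + ⟪du,dy⟫)/‖du‖^2 : ℝ) = 1 + ⟪du,dy⟫/‖du‖^2 by field_simp]
  push_cast
  ring

/-- for an operator `R` on a real Hilbert space `H` and `U ⊆ H`,
`SRG_U(I + R) = 1 + SRG_U(R)`. -/
theorem stmt4 {H : Type*} [NormedAddCommGroup H] [InnerProductSpace ℝ H]
    (R : H → H) (U : Set H) :
    SRG (fun u => u + R u) U = (fun z => 1 + z) '' SRG R U := by
  ext z
  simp only [SRG, Set.mem_setOf_eq, Set.mem_image]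
  constructor
  · rintro ⟨u₁, h₁, u₂, h₂, hne, hz⟩
    have hdu : u₁ - u₂ ≠ 0 := sub_ne_zero.mpr hne
    have key : srgPoint (u₁ - u₂) ((u₁ + R u₁) - (u₂ + R u₂))
        = 1 + srgPoint (u₁ - u₂) (R u₁ - R u₂) := by
      rw [show (u₁ + R u₁) - (u₂ + R u₂) = (u₁ - u₂) + (R u₁ - R u₂) by abel]
      exact srgPoint_add _ _ hdu
    rcases hz with hz | hz
    · exact ⟨srgPoint (u₁ - u₂) (R u₁ - R u₂), ⟨u₁, h₁, u₂, h₂, hne, Or.inl rfl⟩,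
        by rw [hz, key]⟩
    · exact ⟨conj (srgPoint (u₁ - u₂) (R u₁ - R u₂)),
        ⟨u₁, h₁, u₂, h₂, hne, Or.inr rfl⟩, by rw [hz, key, map_add, map_one]⟩
  · rintro ⟨w, ⟨u₁, h₁, u₂, h₂, hne, hw⟩, rfl⟩
    have hdu : u₁ - u₂ ≠ 0 := sub_ne_zero.mpr hne
    have key : srgPoint (u₁ - u₂) ((u₁ + R u₁) - (u₂ + R u₂))
        = 1 + srgPoint (u₁ - u₂) (R u₁ - R u₂) := by
      rw [show (u₁ + R u₁) - (u₂ + R u₂) = (u₁ - u₂) + (R u₁ - R u₂) by abel]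
      exact srgPoint_add _ _ hdu
    refine ⟨u₁, h₁, u₂, h₂, hne, ?_⟩
    rcases hw with hw | hw
    · exact Or.inl (by rw [hw, key])
    · exact Or.inr (by rw [hw, key, map_add, map_one])
end

section
/- Let H be a real Hilbert space, R an injective operator with domain dom(R) ⊆ H mapping into H, and U ⊆ dom(R). Then the scaled relative graph of the inverse operator R⁻¹ : R(dom(R)) → dom(R) over the image set R(U) is the image of SRG_U(R) under the Möbius inversion re^{iφ} ↦ (1/r)e^{iφ}: SRG_{R(U)}(R⁻¹) = { z/|z|² : z ∈ SRG_U(R) }. -/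
open ComplexConjugate
open scoped RealInnerProductSpace Pointwise

lemma srgPoint_inv {H : Type*} [NormedAddCommGroup H] [InnerProductSpace ℝ H]
    (du dy : H) (hdu : du ≠ 0) (hdy : dy ≠ 0) :
    srgPoint du dy / ((Complex.normSq (srgPoint du dy) : ℝ) : ℂ) = srgPoint dy du := by
  have hndu : ‖du‖ ≠ 0 := norm_ne_zero_iff.mpr hdu
  have hndy : ‖dy‖ ≠ 0 := norm_ne_zero_iff.mpr hdy
  unfold srgPoint
  rw [real_inner_comm dy du, mul_comm ‖dy‖ ‖du‖]
  set θ : ℝ := Real.arccos (⟪dy, du⟫ / (‖du‖ * ‖dy‖)) with hθ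
  set e : ℂ := Complex.exp (Complex.I * (θ : ℂ)) with he
  have habs : ‖e‖ = 1 := by
    rw [he, mul_comm]; exact Complex.norm_exp_ofReal_mul_I θ
  have hn : Complex.normSq (((‖dy‖ / ‖du‖ : ℝ) : ℂ) * e) = (‖dy‖ / ‖du‖) * (‖dy‖ / ‖du‖) := by
    rw [map_mul, Complex.normSq_ofReal, Complex.normSq_eq_norm_sq, habs]; ring
  rw [hn]
  push_cast
  have h2 : (‖dy‖ : ℂ) ≠ 0 := by exact_mod_cast hndy
  have h3 : (‖du‖ : ℂ) ≠ 0 := by exact_mod_cast hndu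
  field_simp

lemma conj_div_normSq (z : ℂ) :
    conj z / ((Complex.normSq (conj z) : ℝ) : ℂ)
      = conj (z / ((Complex.normSq z : ℝ) : ℂ)) := by
  rw [Complex.normSq_conj, map_div₀, Complex.conj_ofReal]

/-- for an injective operator `R` on a real Hilbert space `H` (with inverse `g`,
i.e. `g (R u) = u` for all `u`, so that `g` agrees with `R⁻¹ : R(dom R) → dom R` on the range of
`R`) and `U ⊆ H`, the SRG of the inverse over `R(U)` is the image of `SRG_U(R)` under the Möbius
inversion `z ↦ z/|z|²` (i.e. `re^{iφ} ↦ (1/r)e^{iφ}`). -/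
theorem stmt5 {H : Type*} [NormedAddCommGroup H] [InnerProductSpace ℝ H]
    (R : H → H) (hR : Function.Injective R) (g : H → H) (hg : ∀ u, g (R u) = u) (U : Set H) :
    SRG g (R '' U) = (fun z => z / ((Complex.normSq z : ℝ) : ℂ)) '' SRG R U := by
  ext z
  constructor
  · rintro ⟨v₁, ⟨u₁, hu₁, rfl⟩, v₂, ⟨u₂, hu₂, rfl⟩, hne, hz⟩
    have hune : u₁ ≠ u₂ := fun h => hne (by rw [h])
    have hdu : u₁ - u₂ ≠ 0 := sub_ne_zero.mpr hune
    have hdy : R u₁ - R u₂ ≠ 0 := sub_ne_zero.mpr (fun h => hune (hR h))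
    have hkey := srgPoint_inv (u₁ - u₂) (R u₁ - R u₂) hdu hdy
    simp only [hg] at hz
    rcases hz with rfl | rfl
    · exact ⟨srgPoint (u₁ - u₂) (R u₁ - R u₂), ⟨u₁, hu₁, u₂, hu₂, hune, Or.inl rfl⟩, hkey⟩
    · refine ⟨conj (srgPoint (u₁ - u₂) (R u₁ - R u₂)),
        ⟨u₁, hu₁, u₂, hu₂, hune, Or.inr rfl⟩, ?_⟩
      have hc : conj (srgPoint (u₁ - u₂) (R u₁ - R u₂)) /
          ((Complex.normSq (conj (srgPoint (u₁ - u₂) (R u₁ - R u₂))) : ℝ) : ℂ)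
          = conj (srgPoint (R u₁ - R u₂) (u₁ - u₂)) := by
        rw [conj_div_normSq, hkey]
      exact hc
  · rintro ⟨w, ⟨u₁, hu₁, u₂, hu₂, hune, hw⟩, rfl⟩
    have hdu : u₁ - u₂ ≠ 0 := sub_ne_zero.mpr hune
    have hdy : R u₁ - R u₂ ≠ 0 := sub_ne_zero.mpr (fun h => hune (hR h))
    have hkey := srgPoint_inv (u₁ - u₂) (R u₁ - R u₂) hdu hdy
    have hvne : R u₁ ≠ R u₂ := fun h => hune (hR h)
    refine ⟨R u₁, ⟨u₁, hu₁, rfl⟩, R u₂, ⟨u₂, hu₂, rfl⟩, hvne, ?_⟩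
    simp only [hg]
    rcases hw with rfl | rfl
    · exact Or.inl hkey
    · right
      have hc : conj (srgPoint (u₁ - u₂) (R u₁ - R u₂)) /
          ((Complex.normSq (conj (srgPoint (u₁ - u₂) (R u₁ - R u₂))) : ℝ) : ℂ)
          = conj (srgPoint (R u₁ - R u₂) (u₁ - u₂)) := by
        rw [conj_div_normSq, hkey]
      exact hc
end

section
/- Let H be a real Hilbert space, U ⊆ H a set containing at least two points, and R, S operators defined on U mapping into H. If at least one of SRG_U(R), SRG_U(S) satisfies the chord property, then SRG_U(R + S) ⊆ SRG_U(R) + SRG_U(S), where R+S is the pointwise sum (R+S)u := Ru + Su and the right-hand side is the Minkowski sum of subsets of ℂ. -/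
open ComplexConjugate
open scoped RealInnerProductSpace Pointwise

section Aux

variable {H : Type*} [NormedAddCommGroup H] [InnerProductSpace ℝ H]

/-- Orthogonal-complement vector used to compute the imaginary part. -/
noncomputable def vAux (du y : H) : H := (‖du‖^2 : ℝ) • y - (⟪du, y⟫ : ℝ) • du

lemma vAux_add (du y z : H) : vAux du (y + z) = vAux du y + vAux du z := by
  simp only [vAux, inner_add_right, add_smul, smul_add]
  abel

lemma norm_vAux_sq (du y : H) :
    ‖vAux du y‖^2 = ‖du‖^2 * (‖du‖^2 * ‖y‖^2 - ⟪du, y⟫^2) := by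
  have h := norm_sub_sq_real ((‖du‖^2 : ℝ) • y) ((⟪du, y⟫ : ℝ) • du)
  rw [vAux, h, real_inner_smul_left, real_inner_smul_right, norm_smul, norm_smul,
    real_inner_comm y du]
  simp [mul_pow, sq_abs, abs_pow]
  ring

lemma gram_nonneg (du y : H) : 0 ≤ ‖du‖^2 * ‖y‖^2 - ⟪du, y⟫^2 := by
  have h := abs_real_inner_le_norm du y
  have h2 : ⟪du, y⟫^2 ≤ (‖du‖ * ‖y‖)^2 := by
    rw [← sq_abs]
    exact pow_le_pow_left₀ (abs_nonneg _) h 2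
  nlinarith [h2]

lemma norm_vAux (du y : H) :
    ‖vAux du y‖ = ‖du‖ * Real.sqrt (‖du‖^2 * ‖y‖^2 - ⟪du, y⟫^2) := by
  have h : ‖vAux du y‖ = Real.sqrt (‖vAux du y‖^2) := (Real.sqrt_sq (norm_nonneg _)).symm
  rw [h, norm_vAux_sq, Real.sqrt_mul (sq_nonneg _), Real.sqrt_sq (norm_nonneg _)]

lemma srgPoint_apply (du y : H) :
    srgPoint du y =
      (((‖y‖ / ‖du‖) * Real.cos (Real.arccos (⟪du, y⟫ / (‖du‖ * ‖y‖))) : ℝ) : ℂ) +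
      (((‖y‖ / ‖du‖) * Real.sin (Real.arccos (⟪du, y⟫ / (‖du‖ * ‖y‖))) : ℝ) : ℂ) * Complex.I := by
  unfold srgPoint
  rw [mul_comm Complex.I, Complex.exp_mul_I, ← Complex.ofReal_cos, ← Complex.ofReal_sin]
  push_cast
  ring

lemma srgPoint_re (du y : H) (hdu : du ≠ 0) :
    (srgPoint du y).re = ⟪du, y⟫ / ‖du‖^2 := by
  have hn : (0:ℝ) < ‖du‖ := norm_pos_iff.mpr hdu
  rw [srgPoint_apply]
  simp only [Complex.add_re, Complex.ofReal_re, Complex.mul_re, Complex.I_re, Complex.I_im,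
    Complex.ofReal_im]
  by_cases hy : y = 0
  · simp [hy]
  · have hm : (0:ℝ) < ‖y‖ := norm_pos_iff.mpr hy
    have hb : |⟪du, y⟫ / (‖du‖ * ‖y‖)| ≤ 1 := by
      rw [abs_div, abs_of_pos (show (0:ℝ) < ‖du‖ * ‖y‖ by positivity), div_le_one (by positivity)]
      exact abs_real_inner_le_norm du y
    rw [Real.cos_arccos (by linarith [abs_le.mp hb]) (by linarith [abs_le.mp hb])]
    field_simp
    ring

lemma srgPoint_im (du y : H) (hdu : du ≠ 0) :
    (srgPoint du y).im = Real.sqrt (‖du‖^2 * ‖y‖^2 - ⟪du, y⟫^2) / ‖du‖^2 := by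
  have hn : (0:ℝ) < ‖du‖ := norm_pos_iff.mpr hdu
  rw [srgPoint_apply]
  simp only [Complex.add_im, Complex.ofReal_im, Complex.mul_im, Complex.I_re, Complex.I_im,
    Complex.ofReal_re]
  by_cases hy : y = 0
  · simp [hy]
  · have hm : (0:ℝ) < ‖y‖ := norm_pos_iff.mpr hy
    rw [Real.sin_arccos]
    have key : 1 - (⟪du, y⟫ / (‖du‖ * ‖y‖))^2
        = (‖du‖^2 * ‖y‖^2 - ⟪du, y⟫^2) / (‖du‖ * ‖y‖)^2 := by
      field_simp
    rw [key, Real.sqrt_div (gram_nonneg du y), Real.sqrt_sq (by positivity)]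
    field_simp
    ring

lemma bIm_nonneg (du y : H) (hdu : du ≠ 0) : 0 ≤ (srgPoint du y).im := by
  rw [srgPoint_im du y hdu]
  positivity

/-- imaginary part in terms of vAux -/
lemma srgPoint_im' (du y : H) (hdu : du ≠ 0) :
    (srgPoint du y).im = ‖vAux du y‖ / ‖du‖^3 := by
  have hn : (0:ℝ) < ‖du‖ := norm_pos_iff.mpr hdu
  rw [srgPoint_im du y hdu, norm_vAux]
  field_simp

lemma chord_mem {C : Set ℂ} (h : ∀ z ∈ C, ∀ α ∈ Set.Icc (0 : ℝ) 1,
      (α : ℂ) * z + ((1 - α : ℝ) : ℂ) * (starRingEnd ℂ) z ∈ C)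
    {z : ℂ} (hz : z ∈ C) (t : ℝ) (ht : |t| ≤ z.im) :
    (⟨z.re, t⟩ : ℂ) ∈ C := by
  have him : 0 ≤ z.im := le_trans (abs_nonneg t) ht
  rcases eq_or_lt_of_le him with h0 | hpos
  · have ht0 : t = 0 := abs_eq_zero.mp (le_antisymm (by rw [← h0] at ht; exact ht) (abs_nonneg t))
    have : (⟨z.re, t⟩ : ℂ) = z := Complex.ext rfl (by rw [ht0, ← h0])
    rwa [this]
  · set α := (t + z.im) / (2 * z.im) with hα
    have hmem : α ∈ Set.Icc (0:ℝ) 1 := by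
      constructor
      · apply div_nonneg _ (by linarith)
        have := abs_le.mp ht
        linarith [this.1]
      · rw [div_le_one (by linarith)]
        have := abs_le.mp ht
        linarith [this.2]
    have := h z hz α hmem
    have heq : (α : ℂ) * z + ((1 - α : ℝ) : ℂ) * (starRingEnd ℂ) z = ⟨z.re, t⟩ := by
      apply Complex.ext
      · simp only [Complex.add_re, Complex.mul_re, Complex.ofReal_re, Complex.ofReal_im,
          Complex.conj_re, Complex.conj_im]
        ring
      · simp only [Complex.add_im, Complex.mul_im, Complex.ofReal_re, Complex.ofReal_im,
          Complex.conj_re, Complex.conj_im]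
        rw [hα]
        field_simp
        ring
    rwa [heq] at this

end Aux

section Main

variable {H : Type*} [NormedAddCommGroup H] [InnerProductSpace ℝ H]

lemma key_incl (R S : H → H) (U : Set H) (hc : ChordProperty (SRG R U)) :
    SRG (fun u => R u + S u) U ⊆ SRG R U + SRG S U := by
  rintro z ⟨u₁, hu₁, u₂, hu₂, hne, hcase⟩
  have hdu : u₁ - u₂ ≠ 0 := sub_ne_zero.mpr hne
  set du := u₁ - u₂ with hdu'
  set yR := R u₁ - R u₂ with hyR
  set yS := S u₁ - S u₂ with hyS
  have hsum : (fun u => R u + S u) u₁ - (fun u => R u + S u) u₂ = yR + yS := by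
    simp only [hyR, hyS]; abel
  rw [hsum] at hcase
  have hzR : srgPoint du yR ∈ SRG R U := ⟨u₁, hu₁, u₂, hu₂, hne, Or.inl rfl⟩
  have hzS : srgPoint du yS ∈ SRG S U := ⟨u₁, hu₁, u₂, hu₂, hne, Or.inl rfl⟩
  have hzS' : conj (srgPoint du yS) ∈ SRG S U := ⟨u₁, hu₁, u₂, hu₂, hne, Or.inr rfl⟩
  set b := (srgPoint du (yR + yS)).im with hb
  set bR := (srgPoint du yR).im with hbR
  set bS := (srgPoint du yS).im with hbS
  have hd3 : (0:ℝ) < ‖du‖^3 := by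
    have : (0:ℝ) < ‖du‖ := norm_pos_iff.mpr hdu
    positivity
  have htri1 : b ≤ bR + bS := by
    rw [hb, hbR, hbS, srgPoint_im' du _ hdu, srgPoint_im' du _ hdu, srgPoint_im' du _ hdu,
      vAux_add, ← add_div, div_le_div_iff_of_pos_right hd3]
    exact norm_add_le _ _
  have htri2 : bR ≤ b + bS := by
    rw [hb, hbR, hbS, srgPoint_im' du _ hdu, srgPoint_im' du _ hdu, srgPoint_im' du _ hdu,
      vAux_add, ← add_div, div_le_div_iff_of_pos_right hd3]
    have := norm_add_le (vAux du yR + vAux du yS) (-vAux du yS)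
    simpa using this
  have htri3 : bS ≤ b + bR := by
    rw [hb, hbR, hbS, srgPoint_im' du _ hdu, srgPoint_im' du _ hdu, srgPoint_im' du _ hdu,
      vAux_add, ← add_div, div_le_div_iff_of_pos_right hd3]
    have := norm_add_le (vAux du yR + vAux du yS) (-vAux du yR)
    simpa [add_comm] using this
  have hre : (srgPoint du (yR + yS)).re = (srgPoint du yR).re + (srgPoint du yS).re := by
    rw [srgPoint_re du _ hdu, srgPoint_re du _ hdu, srgPoint_re du _ hdu, inner_add_right,
      add_div]
  rw [Set.mem_add]
  rcases hcase with hcase | hcase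
  · set t := b - bS with htdef
    have ht : |t| ≤ bR := abs_le.mpr ⟨by linarith, by linarith⟩
    have hwR : (⟨(srgPoint du yR).re, t⟩ : ℂ) ∈ SRG R U := chord_mem hc hzR t ht
    refine ⟨_, hwR, _, hzS, ?_⟩
    rw [hcase]
    apply Complex.ext
    · simpa using hre.symm
    · simp only [Complex.add_im]
      rw [htdef]; ring
  · set t := bS - b with htdef
    have ht : |t| ≤ bR := abs_le.mpr ⟨by linarith, by linarith⟩
    have hwR : (⟨(srgPoint du yR).re, t⟩ : ℂ) ∈ SRG R U := chord_mem hc hzR t ht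
    refine ⟨_, hwR, _, hzS', ?_⟩
    rw [hcase]
    apply Complex.ext
    · simpa using hre.symm
    · simp only [Complex.add_im, Complex.conj_im]
      rw [htdef]; ring

end Main

/-- if `U` contains at least two points and at least one of `SRG_U(R)`,
`SRG_U(S)` satisfies the chord property, then `SRG_U(R+S) ⊆ SRG_U(R) + SRG_U(S)`
(Minkowski sum). -/
theorem stmt6 {H : Type*} [NormedAddCommGroup H] [InnerProductSpace ℝ H]
    (R S : H → H) (U : Set H) (hU : ∃ u ∈ U, ∃ v ∈ U, u ≠ v)
    (hc : ChordProperty (SRG R U) ∨ ChordProperty (SRG S U)) :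
    SRG (fun u => R u + S u) U ⊆ SRG R U + SRG S U := by
  rcases hc with hc | hc
  · exact key_incl R S U hc
  · have hfun : (fun u => R u + S u) = (fun u => S u + R u) := funext fun u => add_comm _ _
    rw [hfun, add_comm (SRG R U)]
    exact key_incl S R U hc
end

section
/- Let H be a real Hilbert space, U ⊆ H a set containing at least two points, R an operator defined on U mapping into H, Y ⊆ H a set containing at least two points with R(U) ⊆ Y, and T an operator defined on Y mapping into H. If at least one of SRG_U(R), SRG_Y(T) satisfies an arc property (left-arc or right-arc), then SRG_U(T ∘ R) ⊆ SRG_Y(T) · SRG_U(R), where the right-hand side is the Minkowski product { z·w : z ∈ SRG_Y(T), w ∈ SRG_U(R) } of subsets of ℂ. -/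
open ComplexConjugate
open scoped RealInnerProductSpace Pointwise

open Real InnerProductGeometry

section Tri
variable {V : Type*} [NormedAddCommGroup V] [InnerProductSpace ℝ V]

lemma my_arccos_le_arccos {x y : ℝ} (h1 : -1 ≤ x) (h : x ≤ y) : arccos y ≤ arccos x := by
  rw [arccos_eq_pi_div_two_sub_arcsin, arccos_eq_pi_div_two_sub_arcsin]
  have := Real.monotone_arcsin h
  linarith

private lemma norm_sub_smul_eq {u v : V} {t : ℝ} (hu : ‖u‖ = 1) (hv : ‖v‖ = 1)
    (ht : t = ⟪u, v⟫) : ‖u - t • v‖ = Real.sqrt (1 - t ^ 2) := by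
  have hiv : ⟪v, v⟫ = (1 : ℝ) := by rw [real_inner_self_eq_norm_sq, hv]; norm_num
  have key : ⟪u - t • v, u - t • v⟫ = 1 - t ^ 2 := by
    rw [inner_sub_left, inner_sub_right, inner_sub_right, real_inner_smul_left,
      real_inner_smul_left, real_inner_smul_right, real_inner_smul_right, hiv,
      real_inner_self_eq_norm_sq, hu, real_inner_comm u v, ← ht]
    ring
  rw [← Real.sqrt_sq (norm_nonneg (u - t • v)), ← real_inner_self_eq_norm_sq, key]

lemma angle_triangle_unit {x y z : V} (hx : ‖x‖ = 1) (hy : ‖y‖ = 1) (hz : ‖z‖ = 1) :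
    angle x z ≤ angle x y + angle y z := by
  have habs : ∀ u v : V, ‖u‖ = 1 → ‖v‖ = 1 → |⟪u, v⟫| ≤ 1 := by
    intro u v hu hv
    have := abs_real_inner_le_norm u v
    rw [hu, hv] at this; simpa using this
  have ha1 : |⟪x, y⟫| ≤ 1 := habs x y hx hy
  have hb1 : |⟪y, z⟫| ≤ 1 := habs y z hy hz
  have hyy : ⟪y, y⟫ = (1 : ℝ) := by rw [real_inner_self_eq_norm_sq, hy]; norm_num
  have h1 : ⟪x - ⟪x, y⟫ • y, z - ⟪y, z⟫ • y⟫ = ⟪x, z⟫ - ⟪x, y⟫ * ⟪y, z⟫ := by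
    rw [inner_sub_left, inner_sub_right, inner_sub_right, real_inner_smul_left,
      real_inner_smul_left, real_inner_smul_right, real_inner_smul_right, hyy,
      real_inner_comm y x]
    ring
  have h2 : ‖x - ⟪x, y⟫ • y‖ = Real.sqrt (1 - ⟪x, y⟫ ^ 2) := norm_sub_smul_eq hx hy rfl
  have h3 : ‖z - ⟪y, z⟫ • y‖ = Real.sqrt (1 - ⟪y, z⟫ ^ 2) :=
    norm_sub_smul_eq hz hy (real_inner_comm z y)
  have hCS := abs_real_inner_le_norm (x - ⟪x, y⟫ • y) (z - ⟪y, z⟫ • y)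
  rw [h1, h2, h3] at hCS
  have hkey : ⟪x, y⟫ * ⟪y, z⟫ - Real.sqrt (1 - ⟪x, y⟫ ^ 2) * Real.sqrt (1 - ⟪y, z⟫ ^ 2)
      ≤ ⟪x, z⟫ := by
    have := abs_le.mp hCS
    linarith [this.1]
  have e1 : angle x y = arccos ⟪x, y⟫ := by unfold angle; rw [hx, hy]; norm_num
  have e2 : angle y z = arccos ⟪y, z⟫ := by unfold angle; rw [hy, hz]; norm_num
  have e3 : angle x z = arccos ⟪x, z⟫ := by unfold angle; rw [hx, hz]; norm_num
  rcases le_or_gt π (angle x y + angle y z) with h | h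
  · exact (angle_le_pi x z).trans h
  · have hs0 : 0 ≤ angle x y + angle y z := add_nonneg (angle_nonneg _ _) (angle_nonneg _ _)
    have hcos : Real.cos (angle x y + angle y z) ≤ ⟪x, z⟫ := by
      rw [Real.cos_add, e1, e2, Real.cos_arccos (abs_le.mp ha1).1 (abs_le.mp ha1).2,
        Real.cos_arccos (abs_le.mp hb1).1 (abs_le.mp hb1).2, Real.sin_arccos,
        Real.sin_arccos]
      exact hkey
    calc angle x z = arccos ⟪x, z⟫ := e3
      _ ≤ arccos (Real.cos (angle x y + angle y z)) :=
          my_arccos_le_arccos (neg_one_le_cos _) hcos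
      _ = angle x y + angle y z := Real.arccos_cos hs0 h.le

lemma angle_triangle (x y z : V) : angle x z ≤ angle x y + angle y z := by
  rcases eq_or_ne x 0 with rfl | hx
  · rw [angle_zero_left, angle_zero_left]
    linarith [angle_nonneg y z]
  rcases eq_or_ne y 0 with rfl | hy
  · rw [angle_zero_left, angle_zero_right]
    linarith [angle_le_pi x z]
  rcases eq_or_ne z 0 with rfl | hz
  · rw [angle_zero_right, angle_zero_right]
    linarith [angle_nonneg x y]
  have hnx : (0 : ℝ) < ‖x‖⁻¹ := inv_pos.mpr (norm_pos_iff.mpr hx)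
  have hny : (0 : ℝ) < ‖y‖⁻¹ := inv_pos.mpr (norm_pos_iff.mpr hy)
  have hnz : (0 : ℝ) < ‖z‖⁻¹ := inv_pos.mpr (norm_pos_iff.mpr hz)
  have nu : ∀ (v : V), v ≠ 0 → ‖(‖v‖⁻¹ • v)‖ = 1 := by
    intro v hv
    have : ‖v‖ ≠ 0 := norm_ne_zero_iff.mpr hv
    rw [norm_smul, Real.norm_eq_abs, abs_inv, abs_norm]
    field_simp
  have e1 : angle x z = angle (‖x‖⁻¹ • x) (‖z‖⁻¹ • z) := by
    rw [angle_smul_left_of_pos _ _ hnx, angle_smul_right_of_pos _ _ hnz]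
  have e2 : angle x y = angle (‖x‖⁻¹ • x) (‖y‖⁻¹ • y) := by
    rw [angle_smul_left_of_pos _ _ hnx, angle_smul_right_of_pos _ _ hny]
  have e3 : angle y z = angle (‖y‖⁻¹ • y) (‖z‖⁻¹ • z) := by
    rw [angle_smul_left_of_pos _ _ hny, angle_smul_right_of_pos _ _ hnz]
  rw [e1, e2, e3]
  exact angle_triangle_unit (nu x hx) (nu y hy) (nu z hz)

end Tri

section Arcs

lemma form_abs_arg {r θ : ℝ} (hr : 0 < r) (h1 : -π < θ) (h2 : θ ≤ π) :
    ‖(r : ℂ) * Complex.exp (Complex.I * (θ : ℂ))‖ = r ∧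
    Complex.arg ((r : ℂ) * Complex.exp (Complex.I * (θ : ℂ))) = θ := by
  rw [mul_comm Complex.I, Complex.exp_mul_I]
  constructor
  · rw [norm_mul, Complex.norm_real, Complex.norm_cos_add_sin_mul_I, Real.norm_eq_abs, abs_of_pos hr, mul_one]
  · exact Complex.arg_mul_cos_add_sin_mul_I hr ⟨h1, h2⟩

lemma exists_alpha {β μ : ℝ} (h : |μ| ≤ |β|) :
    ∃ α ∈ Set.Icc (0 : ℝ) 1, (1 - 2 * α) * β = μ := by
  rcases eq_or_ne β 0 with rfl | hβ
  · have hμ : μ = 0 := by simpa using h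
    exact ⟨0, by norm_num, by simp [hμ]⟩
  · have hb : 0 < |β| := abs_pos.mpr hβ
    have h1 : |μ / β| ≤ 1 := by rw [abs_div]; exact div_le_one_of_le₀ h hb.le
    have h2 := abs_le.mp h1
    refine ⟨(1 - μ / β) / 2, ⟨by linarith [h2.2], by linarith [h2.1]⟩, ?_⟩
    field_simp
    ring

lemma mem_arcPlus {r θ γ : ℝ} (hr : 0 ≤ r) (hθ0 : 0 ≤ θ) (hθπ : θ ≤ π) (hγ : |γ| ≤ θ) :
    (r : ℂ) * Complex.exp (Complex.I * (γ : ℂ)) ∈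
      arcPlus ((r : ℂ) * Complex.exp (Complex.I * (θ : ℂ))) := by
  rcases hr.eq_or_lt with rfl | hr
  · exact ⟨0, by norm_num, by push_cast; simp⟩
  · obtain ⟨habs, harg⟩ := form_abs_arg hr (by linarith [Real.pi_pos]) hθπ
    obtain ⟨α, hα, hval⟩ := exists_alpha (β := θ) (μ := γ) (by rwa [abs_of_nonneg hθ0])
    exact ⟨α, hα, by rw [habs, harg, hval]⟩

lemma neg_form (r θ : ℝ) :
    -((r : ℂ) * Complex.exp (Complex.I * (θ : ℂ))) =
      (r : ℂ) * Complex.exp (Complex.I * ((θ - π : ℝ) : ℂ)) := by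
  have : Complex.exp (Complex.I * ((θ - π : ℝ) : ℂ)) =
      Complex.exp (Complex.I * (θ : ℂ)) * Complex.exp (-(π * Complex.I)) := by
    rw [← Complex.exp_add]; push_cast; ring_nf
  rw [this, Complex.exp_neg, Complex.exp_pi_mul_I]
  ring

lemma mem_arcMinus {r θ γ : ℝ} (hr : 0 ≤ r) (hθ0 : 0 ≤ θ) (hθπ : θ ≤ π)
    (hγ1 : θ ≤ γ) (hγ2 : γ ≤ 2 * π - θ) :
    (r : ℂ) * Complex.exp (Complex.I * (γ : ℂ)) ∈
      arcMinus ((r : ℂ) * Complex.exp (Complex.I * (θ : ℂ))) := by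
  rcases hr.eq_or_lt with rfl | hr
  · exact ⟨0, ⟨0, by norm_num, by push_cast; simp⟩, by push_cast; simp⟩
  · set β : ℝ := if θ = 0 then π else θ - π with hβ
    have hβmem : -π < β ∧ β ≤ π := by
      rcases eq_or_ne θ 0 with h0 | h0
      · simp [hβ, h0, Real.pi_pos, Real.pi_pos.le]
      · have : 0 < θ := lt_of_le_of_ne hθ0 (Ne.symm h0)
        simp only [hβ, if_neg h0]
        constructor <;> linarith [Real.pi_pos]
    have hnegz : -((r : ℂ) * Complex.exp (Complex.I * (θ : ℂ))) =
        (r : ℂ) * Complex.exp (Complex.I * (β : ℂ)) := by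
      rcases eq_or_ne θ 0 with h0 | h0
      · rw [neg_form, hβ, if_pos h0]
        congr 1
        rw [Complex.exp_eq_exp_iff_exists_int]
        exact ⟨-1, by rw [h0]; push_cast; ring⟩
      · rw [neg_form, hβ, if_neg h0]
    have habsβ : |γ - π| ≤ |β| := by
      have : |β| = π - θ := by
        rcases eq_or_ne θ 0 with h0 | h0
        · simp [hβ, h0, abs_of_nonneg Real.pi_pos.le]
        · have h1 : 0 < θ := lt_of_le_of_ne hθ0 (Ne.symm h0)
          rw [hβ, if_neg h0, abs_of_nonpos (by linarith), neg_sub]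
      rw [this, abs_le]
      constructor <;> linarith
    obtain ⟨habs, harg⟩ := form_abs_arg hr hβmem.1 hβmem.2
    obtain ⟨α, hα, hval⟩ := exists_alpha habsβ
    refine ⟨(r : ℂ) * Complex.exp (Complex.I * ((γ - π : ℝ) : ℂ)), ⟨α, hα, ?_⟩, ?_⟩
    · rw [hnegz, habs, harg, hval]
    · show -((r : ℂ) * Complex.exp (Complex.I * ((γ - π : ℝ) : ℂ))) = _
      rw [neg_form]
      congr 1
      rw [Complex.exp_eq_exp_iff_exists_int]
      exact ⟨-1, by push_cast; ring⟩

lemma mul_form (r₁ r₂ θ₁ θ₂ : ℝ) :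
    ((r₂ : ℂ) * Complex.exp (Complex.I * (θ₂ : ℂ))) *
      ((r₁ : ℂ) * Complex.exp (Complex.I * (θ₁ : ℂ))) =
    ((r₁ * r₂ : ℝ) : ℂ) * Complex.exp (Complex.I * ((θ₁ + θ₂ : ℝ) : ℂ)) := by
  rw [show Complex.I * ((θ₁ + θ₂ : ℝ) : ℂ) =
      Complex.I * (θ₂ : ℂ) + Complex.I * (θ₁ : ℂ) from by push_cast; ring,
    Complex.exp_add]
  push_cast
  ring

lemma conj_form (r θ : ℝ) :
    conj ((r : ℂ) * Complex.exp (Complex.I * (θ : ℂ))) =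
      (r : ℂ) * Complex.exp (Complex.I * ((-θ : ℝ) : ℂ)) := by
  rw [map_mul, Complex.conj_ofReal, ← Complex.exp_conj, map_mul, Complex.conj_I,
    Complex.conj_ofReal]
  congr 2
  push_cast
  ring

end Arcs

section SRGfacts

variable {H : Type*} [NormedAddCommGroup H] [InnerProductSpace ℝ H]

lemma srgPoint_eq (du dy : H) :
    srgPoint du dy =
      ((‖dy‖ / ‖du‖ : ℝ) : ℂ) * Complex.exp (Complex.I * ((angle du dy : ℝ) : ℂ)) := rfl

lemma srgPoint_zero (du : H) : srgPoint du 0 = 0 := by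
  simp [srgPoint]

lemma conj_mem_SRG {R : H → H} {U : Set H} {z : ℂ} (h : z ∈ SRG R U) : conj z ∈ SRG R U := by
  obtain ⟨u₁, h₁, u₂, h₂, hne, h | h⟩ := h
  · exact ⟨u₁, h₁, u₂, h₂, hne, Or.inr (by rw [h])⟩
  · exact ⟨u₁, h₁, u₂, h₂, hne, Or.inl (by rw [h, Complex.conj_conj])⟩

end SRGfacts

/-- if `U`, `Y` each contain at least two points, `R(U) ⊆ Y`, and at least one
of `SRG_U(R)`, `SRG_Y(T)` satisfies an arc property, then `SRG_U(T∘R) ⊆ SRG_Y(T)·SRG_U(R)`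
(Minkowski product). -/
theorem stmt7 {H : Type*} [NormedAddCommGroup H] [InnerProductSpace ℝ H]
    (R T : H → H) (U Y : Set H)
    (hU : ∃ u ∈ U, ∃ v ∈ U, u ≠ v) (hY : ∃ u ∈ Y, ∃ v ∈ Y, u ≠ v)
    (hmaps : Set.MapsTo R U Y)
    (harc : ArcProperty (SRG R U) ∨ ArcProperty (SRG T Y)) :
    SRG (T ∘ R) U ⊆ SRG T Y * SRG R U := by
  have key : ∀ u₁ ∈ U, ∀ u₂ ∈ U, u₁ ≠ u₂ →
      srgPoint (u₁ - u₂) ((T ∘ R) u₁ - (T ∘ R) u₂) ∈ SRG T Y * SRG R U := by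
    intro u₁ hu₁ u₂ hu₂ hne
    have hY₁ : R u₁ ∈ Y := hmaps hu₁
    have hY₂ : R u₂ ∈ Y := hmaps hu₂
    have hdu : u₁ - u₂ ≠ 0 := sub_ne_zero.mpr hne
    have hcomp : (T ∘ R) u₁ - (T ∘ R) u₂ = T (R u₁) - T (R u₂) := rfl
    rw [hcomp]
    have hmemR : srgPoint (u₁ - u₂) (R u₁ - R u₂) ∈ SRG R U :=
      ⟨u₁, hu₁, u₂, hu₂, hne, Or.inl rfl⟩
    by_cases hdy : R u₁ - R u₂ = 0
    · -- R u₁ = R u₂, hence T (R u₁) - T (R u₂) = 0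
      have hR : R u₁ = R u₂ := sub_eq_zero.mp hdy
      obtain ⟨y₁, hy₁, y₂, hy₂, hyne⟩ := hY
      refine ⟨srgPoint (y₁ - y₂) (T y₁ - T y₂), ⟨y₁, hy₁, y₂, hy₂, hyne, Or.inl rfl⟩,
        srgPoint (u₁ - u₂) (R u₁ - R u₂), hmemR, ?_⟩
      show _ * _ = _
      rw [hdy, srgPoint_zero, hR, sub_self, srgPoint_zero, mul_zero]
    · have hRne : R u₁ ≠ R u₂ := fun h => hdy (by rw [h, sub_self])
      have hmemT : srgPoint (R u₁ - R u₂) (T (R u₁) - T (R u₂)) ∈ SRG T Y :=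
        ⟨R u₁, hY₁, R u₂, hY₂, hRne, Or.inl rfl⟩
      by_cases hdT : T (R u₁) - T (R u₂) = 0
      · refine ⟨srgPoint (R u₁ - R u₂) (T (R u₁) - T (R u₂)), hmemT,
          srgPoint (u₁ - u₂) (R u₁ - R u₂), hmemR, ?_⟩
        show _ * _ = _
        rw [hdT, srgPoint_zero, srgPoint_zero, zero_mul]
      · -- main case: all increments nonzero
        set du := u₁ - u₂ with hdudef
        set dy := R u₁ - R u₂ with hdydef
        set dT := T (R u₁) - T (R u₂) with hdTdef
        have hndu : (0 : ℝ) < ‖du‖ := norm_pos_iff.mpr hdu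
        have hndy : (0 : ℝ) < ‖dy‖ := norm_pos_iff.mpr hdy
        have hndT : (0 : ℝ) < ‖dT‖ := norm_pos_iff.mpr hdT
        have hr1 : (0 : ℝ) ≤ ‖dy‖ / ‖du‖ := div_nonneg hndy.le hndu.le
        have hr2 : (0 : ℝ) ≤ ‖dT‖ / ‖dy‖ := div_nonneg hndT.le hndy.le
        have hrprod : (‖dy‖ / ‖du‖) * (‖dT‖ / ‖dy‖) = ‖dT‖ / ‖du‖ := by
          field_simp
        have T1 : angle du dT ≤ angle du dy + angle dy dT := angle_triangle du dy dT
        have T2 : angle du dy ≤ angle du dT + angle dy dT := by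
          have := angle_triangle du dT dy
          rwa [angle_comm dT dy] at this
        have T3 : angle dy dT ≤ angle du dy + angle du dT := by
          have := angle_triangle dy du dT
          rwa [angle_comm dy du] at this
        have T4 : angle du dy + angle dy dT + angle du dT ≤ 2 * π := by
          have h := angle_triangle du (-dy) dT
          rw [angle_neg_right, angle_neg_left] at h
          linarith
        rcases harc with hA | hA
        · rcases hA with hL | hR
          · -- left-arc property of SRG R U
            have hmem : ((‖dy‖ / ‖du‖ : ℝ) : ℂ) *
                Complex.exp (Complex.I * ((angle dy dT + angle du dT : ℝ) : ℂ)) ∈ SRG R U := by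
              apply hL _ hmemR
              rw [srgPoint_eq]
              exact mem_arcMinus hr1 (angle_nonneg du dy) (angle_le_pi du dy)
                (by linarith) (by linarith)
            refine ⟨conj (srgPoint dy dT), ⟨R u₁, hY₁, R u₂, hY₂, hRne, Or.inr rfl⟩,
              _, hmem, ?_⟩
            show _ * _ = _
            rw [srgPoint_eq dy dT, conj_form, mul_form, srgPoint_eq du dT,
              show angle dy dT + angle du dT + -angle dy dT = angle du dT from by ring,
              hrprod]
          · -- right-arc property of SRG R U
            have hmem : ((‖dy‖ / ‖du‖ : ℝ) : ℂ) *
                Complex.exp (Complex.I * ((angle du dT - angle dy dT : ℝ) : ℂ)) ∈ SRG R U := by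
              apply hR _ hmemR
              rw [srgPoint_eq]
              exact mem_arcPlus hr1 (angle_nonneg du dy) (angle_le_pi du dy)
                (by rw [abs_le]; constructor <;>
                  [linarith [angle_nonneg dy dT]; linarith [angle_nonneg dy dT]])
            refine ⟨srgPoint dy dT, hmemT, _, hmem, ?_⟩
            show _ * _ = _
            rw [srgPoint_eq dy dT, mul_form, srgPoint_eq du dT,
              show angle du dT - angle dy dT + angle dy dT = angle du dT from by ring,
              hrprod]
        · rcases hA with hL | hR
          · -- left-arc property of SRG T Y
            have hmem : ((‖dT‖ / ‖dy‖ : ℝ) : ℂ) *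
                Complex.exp (Complex.I * ((angle du dy + angle du dT : ℝ) : ℂ)) ∈ SRG T Y := by
              apply hL _ hmemT
              rw [srgPoint_eq]
              exact mem_arcMinus hr2 (angle_nonneg dy dT) (angle_le_pi dy dT)
                (by linarith) (by linarith)
            refine ⟨_, hmem, conj (srgPoint du dy), ⟨u₁, hu₁, u₂, hu₂, hne, Or.inr rfl⟩, ?_⟩
            show _ * _ = _
            rw [srgPoint_eq du dy, conj_form, mul_form, srgPoint_eq du dT,
              show -angle du dy + (angle du dy + angle du dT) = angle du dT from by ring,
              hrprod]
          · -- right-arc property of SRG T Y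
            have hmem : ((‖dT‖ / ‖dy‖ : ℝ) : ℂ) *
                Complex.exp (Complex.I * ((angle du dT - angle du dy : ℝ) : ℂ)) ∈ SRG T Y := by
              apply hR _ hmemT
              rw [srgPoint_eq]
              exact mem_arcPlus hr2 (angle_nonneg dy dT) (angle_le_pi dy dT)
                (by rw [abs_le]; constructor <;>
                  [linarith [angle_nonneg du dy]; linarith [angle_nonneg du dy]])
            refine ⟨_, hmem, srgPoint du dy, hmemR, ?_⟩
            show _ * _ = _
            rw [srgPoint_eq du dy, mul_form, srgPoint_eq du dT,
              show angle du dy + (angle du dT - angle du dy) = angle du dT from by ring,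
              hrprod]
  intro z hz
  obtain ⟨u₁, hu₁, u₂, hu₂, hne, hz | hz⟩ := hz
  · exact hz ▸ key u₁ hu₁ u₂ hu₂ hne
  · obtain ⟨b, hb, a, ha, hba⟩ := key u₁ hu₁ u₂ hu₂ hne
    exact ⟨conj b, conj_mem_SRG hb, conj a, conj_mem_SRG ha, by rw [hz, ← hba, map_mul]⟩
end

section
/- Let H be a real Hilbert space, U ⊆ H a set containing at least two points, and R, S operators defined on U mapping into H. Then SRG_U(R + S) ⊆ (SRG_U(R)^c + SRG_U(S)) ∩ (SRG_U(R) + SRG_U(S)^c), where C^c := ∪_{z∈C} [z, z̄] denotes the chord completion of C ⊆ ℂ, the sums are Minkowski sums, and (R+S)u := Ru + Su. -/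
open ComplexConjugate
open scoped RealInnerProductSpace Pointwise

/-- The chord completion `C^c = ⋃_{z ∈ C} [z, z̄]`. -/
def chordCompletion (C : Set ℂ) : Set ℂ :=
  { w | ∃ z ∈ C, ∃ α ∈ Set.Icc (0 : ℝ) 1, w = (α : ℂ) * z + ((1 - α : ℝ) : ℂ) * conj z }

lemma srgPoint_eq_s10 {H : Type*} [NormedAddCommGroup H] [InnerProductSpace ℝ H]
    (du dy : H) (hdu : du ≠ 0) :
    srgPoint du dy = ⟨⟪du, dy⟫ / ‖du‖ ^ 2,
      ‖dy - (⟪du, dy⟫ / ‖du‖ ^ 2) • du‖ / ‖du‖⟩ := by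
  have hdu' : ‖du‖ ≠ 0 := norm_ne_zero_iff.mpr hdu
  by_cases hdy : dy = 0
  · simp [srgPoint, hdy, Complex.ext_iff]
  · have hdy' : ‖dy‖ ≠ 0 := norm_ne_zero_iff.mpr hdy
    set x : ℝ := ⟪du, dy⟫ / (‖du‖ * ‖dy‖) with hxdef
    have hx : |x| ≤ 1 := abs_real_inner_div_norm_mul_norm_le_one du dy
    have hx1 : -1 ≤ x := neg_le_of_abs_le hx
    have hx2 : x ≤ 1 := le_of_abs_le hx
    set w : H := dy - (⟪du, dy⟫ / ‖du‖ ^ 2) • du with hwdef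
    have hw2 : ‖w‖ ^ 2 = ‖dy‖ ^ 2 - ⟪du, dy⟫ ^ 2 / ‖du‖ ^ 2 := by
      rw [hwdef, @norm_sub_sq_real, inner_smul_right, norm_smul,
        Real.norm_eq_abs, mul_pow, sq_abs, real_inner_comm dy du]
      field_simp
      ring
    have key : ‖dy‖ * Real.sqrt (1 - x ^ 2) = ‖w‖ := by
      rw [← Real.sqrt_sq (norm_nonneg dy), ← Real.sqrt_mul (sq_nonneg _)]
      rw [show ‖dy‖ ^ 2 * (1 - x ^ 2) = ‖w‖ ^ 2 by
        rw [hw2, hxdef]; field_simp]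
      exact Real.sqrt_sq (norm_nonneg w)
    rw [srgPoint, mul_comm Complex.I, Complex.exp_mul_I, ← Complex.ofReal_cos,
      ← Complex.ofReal_sin, Real.cos_arccos hx1 hx2, Real.sin_arccos,
      mul_add, ← Complex.ofReal_mul, ← mul_assoc, ← Complex.ofReal_mul]
    rw [Complex.ext_iff]
    constructor
    · simp only [Complex.add_re, Complex.ofReal_re, Complex.mul_re, Complex.I_re,
        Complex.ofReal_im, Complex.I_im]
      rw [hxdef]; field_simp; ring
    · simp only [Complex.add_im, Complex.ofReal_im, Complex.mul_im, Complex.I_im,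
        Complex.ofReal_re, Complex.I_re]
      rw [div_mul_eq_mul_div, key]; ring

lemma proj_add {H : Type*} [NormedAddCommGroup H] [InnerProductSpace ℝ H]
    (du a b : H) :
    (a + b) - (⟪du, a + b⟫ / ‖du‖ ^ 2) • du =
      (a - (⟪du, a⟫ / ‖du‖ ^ 2) • du) + (b - (⟪du, b⟫ / ‖du‖ ^ 2) • du) := by
  rw [inner_add_right, add_div]
  module

lemma mem_chordCompletion (C : Set ℂ) {z : ℂ} (hz : z ∈ C) {s : ℝ} (hs : |s| ≤ z.im) :
    (⟨z.re, s⟩ : ℂ) ∈ chordCompletion C := by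
  by_cases h0 : z.im = 0
  · have hs0 : s = 0 := by
      have : |s| ≤ 0 := h0 ▸ hs
      simpa using abs_nonpos_iff.mp this
    refine ⟨z, hz, 0, ⟨le_refl 0, zero_le_one⟩, ?_⟩
    rw [Complex.ext_iff]
    simp [hs0, h0]
  · have him : 0 < z.im := lt_of_le_of_ne (le_trans (abs_nonneg s) hs) (Ne.symm h0)
    have h1 : -1 ≤ s / z.im := by
      rw [le_div_iff₀ him]
      nlinarith [neg_abs_le s]
    have h2 : s / z.im ≤ 1 := by
      rw [div_le_one him]
      exact le_trans (le_abs_self s) hs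
    refine ⟨z, hz, (s / z.im + 1) / 2, ⟨by linarith, by linarith⟩, ?_⟩
    rw [Complex.ext_iff]
    constructor
    · simp [Complex.mul_re]
      ring
    · simp [Complex.mul_im]
      field_simp
      ring


/-- improved chord completion bound for sums: if `U` contains at least two points,
then `SRG_U(R+S) ⊆ (SRG_U(R)^c + SRG_U(S)) ∩ (SRG_U(R) + SRG_U(S)^c)`. -/
theorem stmt10 {H : Type*} [NormedAddCommGroup H] [InnerProductSpace ℝ H]
    (R S : H → H) (U : Set H) (hU : ∃ u ∈ U, ∃ v ∈ U, u ≠ v) :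
    SRG (fun u => R u + S u) U ⊆
      (chordCompletion (SRG R U) + SRG S U) ∩ (SRG R U + chordCompletion (SRG S U)) := by
  rintro z ⟨u₁, hu₁, u₂, hu₂, hne, hz⟩
  have hdu : u₁ - u₂ ≠ 0 := sub_ne_zero.mpr hne
  set du := u₁ - u₂ with hdu_def
  set a := R u₁ - R u₂ with ha_def
  set b := S u₁ - S u₂ with hb_def
  have hab : (fun u => R u + S u) u₁ - (fun u => R u + S u) u₂ = a + b := by
    show R u₁ + S u₁ - (R u₂ + S u₂) = (R u₁ - R u₂) + (S u₁ - S u₂)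
    abel
  rw [hab] at hz
  have hdn : (0 : ℝ) < ‖du‖ := norm_pos_iff.mpr hdu
  set Pa := a - (⟪du, a⟫ / ‖du‖ ^ 2) • du with hPa
  set Pb := b - (⟪du, b⟫ / ‖du‖ ^ 2) • du with hPb
  have eR := srgPoint_eq_s10 du a hdu
  have eS := srgPoint_eq_s10 du b hdu
  have eT := srgPoint_eq_s10 du (a + b) hdu
  rw [proj_add du a b] at eT
  have hre : (srgPoint du (a + b)).re = (srgPoint du a).re + (srgPoint du b).re := by
    rw [eR, eS, eT]
    show ⟪du, a + b⟫ / ‖du‖ ^ 2 = ⟪du, a⟫ / ‖du‖ ^ 2 + ⟪du, b⟫ / ‖du‖ ^ 2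
    rw [inner_add_right, add_div]
  have ht1 : |(srgPoint du (a + b)).im - (srgPoint du b).im| ≤ (srgPoint du a).im := by
    rw [eR, eS, eT]
    show |‖Pa + Pb‖ / ‖du‖ - ‖Pb‖ / ‖du‖| ≤ ‖Pa‖ / ‖du‖
    rw [div_sub_div_same, abs_div, abs_of_nonneg (le_of_lt hdn),
      div_le_div_iff_of_pos_right hdn]
    simpa using abs_norm_sub_norm_le (Pa + Pb) Pb
  have ht2 : |(srgPoint du (a + b)).im - (srgPoint du a).im| ≤ (srgPoint du b).im := by
    rw [eR, eS, eT]
    show |‖Pa + Pb‖ / ‖du‖ - ‖Pa‖ / ‖du‖| ≤ ‖Pb‖ / ‖du‖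
    rw [div_sub_div_same, abs_div, abs_of_nonneg (le_of_lt hdn),
      div_le_div_iff_of_pos_right hdn]
    have := abs_norm_sub_norm_le (Pa + Pb) Pa
    rwa [add_sub_cancel_left] at this
  have hmemR : srgPoint du a ∈ SRG R U := ⟨u₁, hu₁, u₂, hu₂, hne, Or.inl rfl⟩
  have hmemS : srgPoint du b ∈ SRG S U := ⟨u₁, hu₁, u₂, hu₂, hne, Or.inl rfl⟩
  have hmemRc : conj (srgPoint du a) ∈ SRG R U := ⟨u₁, hu₁, u₂, hu₂, hne, Or.inr rfl⟩
  have hmemSc : conj (srgPoint du b) ∈ SRG S U := ⟨u₁, hu₁, u₂, hu₂, hne, Or.inr rfl⟩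
  rcases hz with hz | hz
  · constructor
    · have hx := mem_chordCompletion (SRG R U) hmemR ht1
      have hzeq : z = (⟨(srgPoint du a).re,
          (srgPoint du (a + b)).im - (srgPoint du b).im⟩ : ℂ) + srgPoint du b := by
        rw [hz, Complex.ext_iff]
        constructor
        · simpa using hre
        · simp
      rw [hzeq]
      exact Set.add_mem_add hx hmemS
    · have hy := mem_chordCompletion (SRG S U) hmemS ht2
      have hzeq : z = srgPoint du a + (⟨(srgPoint du b).re,
          (srgPoint du (a + b)).im - (srgPoint du a).im⟩ : ℂ) := by
        rw [hz, Complex.ext_iff]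
        constructor
        · simpa using hre
        · simp
      rw [hzeq]
      exact Set.add_mem_add hmemR hy
  · constructor
    · have ht1' : |-((srgPoint du (a + b)).im - (srgPoint du b).im)| ≤ (srgPoint du a).im := by
        rwa [abs_neg]
      have hx := mem_chordCompletion (SRG R U) hmemR ht1'
      have hzeq : z = (⟨(srgPoint du a).re,
          -((srgPoint du (a + b)).im - (srgPoint du b).im)⟩ : ℂ) + conj (srgPoint du b) := by
        rw [hz, Complex.ext_iff]
        constructor
        · simpa using hre
        · simp; ring
      rw [hzeq]
      exact Set.add_mem_add hx hmemSc
    · have ht2' : |-((srgPoint du (a + b)).im - (srgPoint du a).im)| ≤ (srgPoint du b).im := by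
        rwa [abs_neg]
      have hy := mem_chordCompletion (SRG S U) hmemS ht2'
      have hzeq : z = conj (srgPoint du a) + (⟨(srgPoint du b).re,
          -((srgPoint du (a + b)).im - (srgPoint du a).im)⟩ : ℂ) := by
        rw [hz, Complex.ext_iff]
        constructor
        · simpa using hre
        · simp; ring
      rw [hzeq]
      exact Set.add_mem_add hmemRc hy
end

section
/- Let U and Y be Banach spaces, and H₁ : U → Y, H₂ : Y → U maps (not necessarily linear) with finite incremental gains Γ(H₁) < ∞, Γ(H₂) < ∞ satisfying Γ(H₁)·Γ(H₂) < 1. Then for every u ∈ U there exists a unique e ∈ U with e = u − H₂(H₁ e). Moreover, denoting by e(u) this solution and y(u) := H₁(e(u)), for all u₁, u₂ ∈ U one has ‖e(u₁) − e(u₂)‖ ≤ ‖u₁ − u₂‖ / (1 − Γ(H₁)Γ(H₂)) and ‖y(u₁) − y(u₂)‖ ≤ Γ(H₁)·‖u₁ − u₂‖ / (1 − Γ(H₁)Γ(H₂)); in particular the closed-loop map u ↦ y(u) has finite incremental gain. -/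
open scoped ENNReal

/-- The incremental gain (Lipschitz constant) of a map between normed spaces:
`Γ(R) = sup_{u₁ ≠ u₂} ‖Ru₁ − Ru₂‖/‖u₁ − u₂‖`, valued in `[0,∞]` (the terms with `u₁ = u₂`
contribute `0/0 = 0` and do not affect the supremum). -/
noncomputable def incGain {U Y : Type*} [NormedAddCommGroup U] [NormedAddCommGroup Y]
    (R : U → Y) : ℝ≥0∞ :=
  ⨆ u₁ : U, ⨆ u₂ : U, edist (R u₁) (R u₂) / edist u₁ u₂

lemma incGain_lipschitz {U Y : Type*} [NormedAddCommGroup U] [NormedAddCommGroup Y]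
    (R : U → Y) (h : incGain R < ⊤) : LipschitzWith (incGain R).toNNReal R := by
  intro a b
  rw [ENNReal.coe_toNNReal h.ne]
  rcases eq_or_ne a b with rfl | hab
  · simp
  · have hne : edist a b ≠ 0 := by simpa using hab
    have : edist (R a) (R b) / edist a b ≤ incGain R :=
      le_trans (le_iSup (fun u₂ => edist (R a) (R u₂) / edist a u₂) b)
        (le_iSup (fun u₁ => ⨆ u₂, edist (R u₁) (R u₂) / edist u₁ u₂) a)
    exact (ENNReal.div_le_iff hne (edist_ne_top a b)).mp this

/-- incremental small-gain theorem on Banach spaces: if `H₁ : U → Y`,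
`H₂ : Y → U` have finite incremental gains with `Γ(H₁)·Γ(H₂) < 1`, then for every `u ∈ U` the
equation `e = u − H₂(H₁ e)` has a unique solution `e = E u`, and the maps `u ↦ E u` and
`u ↦ H₁(E u)` satisfy the stated incremental bounds; in particular the closed-loop map
`u ↦ H₁(E u)` has finite incremental gain. -/
theorem stmt12 {U Y : Type*}
    [NormedAddCommGroup U] [NormedSpace ℝ U] [CompleteSpace U]
    [NormedAddCommGroup Y] [NormedSpace ℝ Y] [CompleteSpace Y]
    (H₁ : U → Y) (H₂ : Y → U)
    (h1 : incGain H₁ < ⊤) (h2 : incGain H₂ < ⊤)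
    (hsg : incGain H₁ * incGain H₂ < 1) :
    ∃ E : U → U,
      (∀ u, E u = u - H₂ (H₁ (E u))) ∧
      (∀ u e, e = u - H₂ (H₁ e) → e = E u) ∧
      (∀ u₁ u₂, ‖E u₁ - E u₂‖ ≤
        ‖u₁ - u₂‖ / (1 - (incGain H₁).toReal * (incGain H₂).toReal)) ∧
      (∀ u₁ u₂, ‖H₁ (E u₁) - H₁ (E u₂)‖ ≤
        (incGain H₁).toReal * ‖u₁ - u₂‖ / (1 - (incGain H₁).toReal * (incGain H₂).toReal)) := by
  set γ₁ := (incGain H₁).toNNReal with hγ₁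
  set γ₂ := (incGain H₂).toNNReal with hγ₂
  have l1 : LipschitzWith γ₁ H₁ := incGain_lipschitz H₁ h1
  have l2 : LipschitzWith γ₂ H₂ := incGain_lipschitz H₂ h2
  set K : NNReal := γ₂ * γ₁ with hK
  have hKlt : K < 1 := by
    have : ((γ₂ * γ₁ : NNReal) : ℝ≥0∞) < 1 := by
      push_cast
      rw [ENNReal.coe_toNNReal h1.ne, ENNReal.coe_toNNReal h2.ne, mul_comm]
      exact hsg
    exact_mod_cast this
  have hcontr : ∀ u : U, ContractingWith K (fun e => u - H₂ (H₁ e)) := by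
    intro u
    refine ⟨hKlt, ?_⟩
    intro a b
    have : edist (u - H₂ (H₁ a)) (u - H₂ (H₁ b)) = edist (H₂ (H₁ a)) (H₂ (H₁ b)) := by
      simp [edist_sub_left]
    rw [this]
    calc edist (H₂ (H₁ a)) (H₂ (H₁ b)) ≤ γ₂ * edist (H₁ a) (H₁ b) := l2 _ _
      _ ≤ γ₂ * (γ₁ * edist a b) := by gcongr; exact l1 a b
      _ = (K : ℝ≥0∞) * edist a b := by rw [hK]; push_cast; ring
  set E : U → U := fun u => (hcontr u).fixedPoint _ with hE
  have hfix : ∀ u, E u = u - H₂ (H₁ (E u)) := fun u =>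
    ((hcontr u).fixedPoint_isFixedPt).symm
  have huniq : ∀ u e, e = u - H₂ (H₁ e) → e = E u := fun u e he =>
    (hcontr u).fixedPoint_unique he.symm
  have h1K : (0:ℝ) < 1 - (incGain H₁).toReal * (incGain H₂).toReal := by
    have := (hcontr 0).one_sub_K_pos
    have hKr : (K : ℝ) = (incGain H₂).toReal * (incGain H₁).toReal := by
      simp [hK, ENNReal.coe_toNNReal, ENNReal.toReal]; rfl
    rw [hKr, mul_comm] at this
    linarith
  have hEdist : ∀ u₁ u₂, ‖E u₁ - E u₂‖ ≤
      ‖u₁ - u₂‖ / (1 - (incGain H₁).toReal * (incGain H₂).toReal) := by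
    intro u₁ u₂
    have := (hcontr u₁).fixedPoint_lipschitz_in_map (hcontr u₂)
      (C := dist u₁ u₂) (fun z => le_of_eq (dist_sub_right u₁ u₂ _))
    rw [← dist_eq_norm, ← dist_eq_norm]
    have hKr : (K : ℝ) = (incGain H₁).toReal * (incGain H₂).toReal := by
      simp [hK, ENNReal.toReal, mul_comm]; rfl
    rw [hKr] at this
    exact this
  refine ⟨E, hfix, huniq, hEdist, ?_⟩
  intro u₁ u₂
  have hl := l1.dist_le_mul (E u₁) (E u₂)
  rw [dist_eq_norm, dist_eq_norm] at hl
  have hγ₁r : (γ₁ : ℝ) = (incGain H₁).toReal := rfl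
  calc ‖H₁ (E u₁) - H₁ (E u₂)‖ ≤ (γ₁ : ℝ) * ‖E u₁ - E u₂‖ := hl
    _ ≤ (incGain H₁).toReal * (‖u₁ - u₂‖ / (1 - (incGain H₁).toReal * (incGain H₂).toReal)) := by
        rw [hγ₁r]; gcongr; exact hEdist u₁ u₂
    _ = (incGain H₁).toReal * ‖u₁ - u₂‖ / (1 - (incGain H₁).toReal * (incGain H₂).toReal) := by
        ring
end

section
/- Let U and Y be Banach spaces, and H₁ : U → Y, H₂ : Y → U maps with finite incremental gains Γ(H₁) < ∞ and Γ(H₂) < ∞. Suppose there exists Γ̂ > 0 such that for every τ ∈ [0,1], all u₁, u₂ ∈ U, and all e₁, e₂ ∈ U satisfying eᵢ = uᵢ − τ·H₂(H₁ eᵢ) for i = 1,2, it holds that ‖H₁ e₁ − H₁ e₂‖ ≤ Γ̂·‖u₁ − u₂‖. Then for every τ ∈ [0,1] and every u ∈ U there exists a unique e ∈ U with e = u − τ·H₂(H₁ e), and the closed-loop map u ↦ H₁ e is Lipschitz continuous with Lipschitz constant at most Γ̂; in particular this holds for τ = 1. -/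
open scoped ENNReal

lemma lip_of_incGain {U Y : Type*} [NormedAddCommGroup U] [NormedAddCommGroup Y]
    (R : U → Y) (h : incGain R < ⊤) :
    ∃ C : ℝ, 0 ≤ C ∧ ∀ a b, ‖R a - R b‖ ≤ C * ‖a - b‖ := by
  refine ⟨(incGain R).toReal, ENNReal.toReal_nonneg, fun a b => ?_⟩
  rcases eq_or_ne a b with rfl | hab
  · simp [mul_nonneg ENNReal.toReal_nonneg (norm_nonneg _)]
  have hd : edist a b ≠ 0 := by simpa using hab
  have hdt : edist a b ≠ ⊤ := edist_ne_top a b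
  have h1 : edist (R a) (R b) / edist a b ≤ incGain R := le_iSup₂_of_le a b le_rfl
  have h2 : edist (R a) (R b) ≤ incGain R * edist a b :=
    (ENNReal.div_le_iff hd hdt).1 h1
  have h3 := ENNReal.toReal_mono (ENNReal.mul_ne_top h.ne hdt) h2
  rw [ENNReal.toReal_mul] at h3
  simpa [dist_eq_norm, edist_dist, ENNReal.toReal_ofReal dist_nonneg] using h3

/-- incremental homotopy theorem on Banach spaces: suppose `H₁ : U → Y` and
`H₂ : Y → U` have finite incremental gains and there is `Γ̂ > 0` such that for every `τ ∈ [0,1]`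
any two solutions `e₁, e₂` of `eᵢ = uᵢ − τ·H₂(H₁ eᵢ)` satisfy `‖H₁e₁ − H₁e₂‖ ≤ Γ̂‖u₁ − u₂‖`.
Then for every `τ ∈ [0,1]` and every `u` the equation `e = u − τ·H₂(H₁ e)` has a unique
solution `e = E u`, and the closed-loop map `u ↦ H₁(E u)` is Lipschitz with constant at most
`Γ̂`; in particular this holds for `τ = 1`. -/
theorem stmt13 {U Y : Type*}
    [NormedAddCommGroup U] [NormedSpace ℝ U] [CompleteSpace U]
    [NormedAddCommGroup Y] [NormedSpace ℝ Y] [CompleteSpace Y]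
    (H₁ : U → Y) (H₂ : Y → U)
    (h1 : incGain H₁ < ⊤) (h2 : incGain H₂ < ⊤)
    (Γhat : ℝ) (hΓ : 0 < Γhat)
    (hyp : ∀ τ ∈ Set.Icc (0 : ℝ) 1, ∀ u₁ u₂ e₁ e₂ : U,
      e₁ = u₁ - τ • H₂ (H₁ e₁) → e₂ = u₂ - τ • H₂ (H₁ e₂) →
      ‖H₁ e₁ - H₁ e₂‖ ≤ Γhat * ‖u₁ - u₂‖) :
    ∀ τ ∈ Set.Icc (0 : ℝ) 1, ∃ E : U → U,
      (∀ u, E u = u - τ • H₂ (H₁ (E u))) ∧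
      (∀ u e, e = u - τ • H₂ (H₁ e) → e = E u) ∧
      (∀ u₁ u₂, ‖H₁ (E u₁) - H₁ (E u₂)‖ ≤ Γhat * ‖u₁ - u₂‖) := by
  obtain ⟨c1, hc1, hL1⟩ := lip_of_incGain H₁ h1
  obtain ⟨c2, hc2, hL2⟩ := lip_of_incGain H₂ h2
  set L : ℝ := 1 + c2 * Γhat with hLdef
  have hL : 1 ≤ L := by nlinarith
  have hL0 : 0 ≤ L := by linarith
  set δ : ℝ := 1 / (2 * (1 + L * c1 * c2)) with hδdef
  have hden : 0 < 1 + L * c1 * c2 := by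
    have := mul_nonneg (mul_nonneg hL0 hc1) hc2
    linarith
  have hδ : 0 < δ := by positivity
  -- solvability predicate
  set Solv : ℝ → Prop := fun τ => ∀ u : U, ∃ e, e = u - τ • H₂ (H₁ e) with hSolv
  -- continuation step
  have step : ∀ τ₀ ∈ Set.Icc (0:ℝ) 1, ∀ τ ∈ Set.Icc (0:ℝ) 1,
      |τ - τ₀| ≤ δ → Solv τ₀ → Solv τ := by
    intro τ₀ hτ₀ τ hτ hdist hs
    choose E₀ hE₀ using hs
    have hHlip : ∀ u₁ u₂ : U, ‖H₁ (E₀ u₁) - H₁ (E₀ u₂)‖ ≤ Γhat * ‖u₁ - u₂‖ :=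
      fun u₁ u₂ => hyp τ₀ hτ₀ u₁ u₂ _ _ (hE₀ u₁) (hE₀ u₂)
    have hE₀lip : ∀ u₁ u₂ : U, ‖E₀ u₁ - E₀ u₂‖ ≤ L * ‖u₁ - u₂‖ := by
      intro u₁ u₂
      have key : E₀ u₁ - E₀ u₂
          = (u₁ - u₂) - τ₀ • (H₂ (H₁ (E₀ u₁)) - H₂ (H₁ (E₀ u₂))) := by
        conv_lhs => rw [hE₀ u₁, hE₀ u₂]
        rw [smul_sub]; abel
      rw [key]
      have hτ0abs : |τ₀| ≤ 1 := abs_le.2 ⟨by linarith [hτ₀.1], hτ₀.2⟩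
      have h5 : ‖τ₀ • (H₂ (H₁ (E₀ u₁)) - H₂ (H₁ (E₀ u₂)))‖
          ≤ c2 * Γhat * ‖u₁ - u₂‖ := by
        rw [norm_smul]
        have := hL2 (H₁ (E₀ u₁)) (H₁ (E₀ u₂))
        have := hHlip u₁ u₂
        calc |τ₀| * ‖H₂ (H₁ (E₀ u₁)) - H₂ (H₁ (E₀ u₂))‖
            ≤ 1 * ‖H₂ (H₁ (E₀ u₁)) - H₂ (H₁ (E₀ u₂))‖ := by
              apply mul_le_mul_of_nonneg_right hτ0abs (norm_nonneg _)
          _ = ‖H₂ (H₁ (E₀ u₁)) - H₂ (H₁ (E₀ u₂))‖ := one_mul _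
          _ ≤ c2 * ‖H₁ (E₀ u₁) - H₁ (E₀ u₂)‖ := by assumption
          _ ≤ c2 * (Γhat * ‖u₁ - u₂‖) := by
              apply mul_le_mul_of_nonneg_left (hHlip u₁ u₂) hc2
          _ = c2 * Γhat * ‖u₁ - u₂‖ := by ring
      calc ‖(u₁ - u₂) - τ₀ • (H₂ (H₁ (E₀ u₁)) - H₂ (H₁ (E₀ u₂)))‖
          ≤ ‖u₁ - u₂‖ + ‖τ₀ • (H₂ (H₁ (E₀ u₁)) - H₂ (H₁ (E₀ u₂)))‖ := norm_sub_le _ _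
        _ ≤ ‖u₁ - u₂‖ + c2 * Γhat * ‖u₁ - u₂‖ := by linarith
        _ = L * ‖u₁ - u₂‖ := by rw [hLdef]; ring
    intro u
    set Φ : U → U := fun e => E₀ (u - (τ - τ₀) • H₂ (H₁ e)) with hΦ
    set k : ℝ := L * (δ * (c2 * c1)) with hk
    have hk0 : 0 ≤ k := by positivity
    have hΦlip : ∀ e₁ e₂ : U, ‖Φ e₁ - Φ e₂‖ ≤ k * ‖e₁ - e₂‖ := by
      intro e₁ e₂
      have harg : (u - (τ - τ₀) • H₂ (H₁ e₁)) - (u - (τ - τ₀) • H₂ (H₁ e₂))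
          = (τ - τ₀) • (H₂ (H₁ e₂) - H₂ (H₁ e₁)) := by rw [smul_sub]; abel
      have h6 : ‖(u - (τ - τ₀) • H₂ (H₁ e₁)) - (u - (τ - τ₀) • H₂ (H₁ e₂))‖
          ≤ δ * (c2 * c1) * ‖e₁ - e₂‖ := by
        rw [harg, norm_smul]
        have hA : ‖H₂ (H₁ e₂) - H₂ (H₁ e₁)‖ ≤ c2 * (c1 * ‖e₁ - e₂‖) := by
          calc ‖H₂ (H₁ e₂) - H₂ (H₁ e₁)‖ ≤ c2 * ‖H₁ e₂ - H₁ e₁‖ := hL2 _ _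
            _ ≤ c2 * (c1 * ‖e₂ - e₁‖) :=
                mul_le_mul_of_nonneg_left (hL1 _ _) hc2
            _ = c2 * (c1 * ‖e₁ - e₂‖) := by rw [norm_sub_rev]
        calc |τ - τ₀| * ‖H₂ (H₁ e₂) - H₂ (H₁ e₁)‖
            ≤ δ * (c2 * (c1 * ‖e₁ - e₂‖)) := by
              apply mul_le_mul hdist hA (norm_nonneg _) hδ.le
          _ = δ * (c2 * c1) * ‖e₁ - e₂‖ := by ring
      calc ‖Φ e₁ - Φ e₂‖
          ≤ L * ‖(u - (τ - τ₀) • H₂ (H₁ e₁)) - (u - (τ - τ₀) • H₂ (H₁ e₂))‖ :=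
            hE₀lip _ _
        _ ≤ L * (δ * (c2 * c1) * ‖e₁ - e₂‖) := mul_le_mul_of_nonneg_left h6 hL0
        _ = k * ‖e₁ - e₂‖ := by rw [hk]; ring
    have hk1 : k < 1 := by
      rw [hk, hδdef]
      rw [show L * (1 / (2 * (1 + L * c1 * c2)) * (c2 * c1))
          = (L * c1 * c2) / (2 * (1 + L * c1 * c2)) by field_simp]
      rw [div_lt_one (by positivity)]
      nlinarith
    have hcontr : ContractingWith k.toNNReal Φ := by
      constructor
      · exact_mod_cast Real.toNNReal_lt_one.2 hk1
      · apply LipschitzWith.of_dist_le_mul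
        intro x y
        rw [dist_eq_norm, dist_eq_norm, Real.coe_toNNReal k hk0]
        exact hΦlip x y
    haveI : Nonempty U := ⟨0⟩
    set e := hcontr.fixedPoint Φ with he
    have hfix : Φ e = e := hcontr.fixedPoint_isFixedPt
    refine ⟨e, ?_⟩
    have hfix' : E₀ (u - (τ - τ₀) • H₂ (H₁ e)) = e := hfix
    have h7 : e = (u - (τ - τ₀) • H₂ (H₁ e)) - τ₀ • H₂ (H₁ e) := by
      conv_lhs => rw [← hfix', hE₀ (u - (τ - τ₀) • H₂ (H₁ e)), hfix']
    conv_lhs => rw [h7]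
    rw [sub_smul]; abel
  -- induction along the homotopy
  have main : ∀ n : ℕ, ∀ τ ∈ Set.Icc (0:ℝ) (min 1 (n * δ)), Solv τ := by
    intro n
    induction n with
    | zero =>
      intro τ hτ
      have : τ = 0 := le_antisymm (by simpa using hτ.2) hτ.1
      subst this
      intro u
      exact ⟨u, by simp⟩
    | succ n ih =>
      intro τ hτ
      have hτ1 : τ ≤ 1 := hτ.2.trans (min_le_left _ _)
      set τ₀ : ℝ := min τ (min 1 (n * δ)) with hτ₀def
      have hτ₀mem : τ₀ ∈ Set.Icc (0:ℝ) (min 1 (n * δ)) := by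
        constructor
        · exact le_min hτ.1 (le_min zero_le_one (by positivity))
        · exact min_le_right _ _
      have hτ₀1 : τ₀ ∈ Set.Icc (0:ℝ) 1 :=
        ⟨hτ₀mem.1, hτ₀mem.2.trans (min_le_left _ _)⟩
      have hs₀ : Solv τ₀ := ih τ₀ hτ₀mem
      have hd : |τ - τ₀| ≤ δ := by
        rw [abs_le]
        constructor
        · have : τ₀ ≤ τ := min_le_left _ _
          linarith
        · rcases le_total τ (min 1 (↑n * δ)) with h | h
          · rw [hτ₀def, min_eq_left h]; linarith
          · rw [hτ₀def, min_eq_right h]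
            rcases le_total 1 ((n:ℝ) * δ) with h' | h'
            · rw [min_eq_left h']; linarith
            · rw [min_eq_right h']
              have := hτ.2.trans (min_le_right 1 (((n:ℕ)+1 : ℕ) * δ))
              push_cast at this ⊢
              linarith
      exact step τ₀ hτ₀1 τ ⟨hτ.1, hτ1⟩ hd hs₀
  have solvall : ∀ τ ∈ Set.Icc (0:ℝ) 1, Solv τ := by
    intro τ hτ
    set n := ⌈1 / δ⌉₊ with hn
    have hnδ : 1 ≤ (n:ℝ) * δ := by
      have h8 : 1 / δ ≤ (n:ℝ) := Nat.le_ceil _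
      calc (1:ℝ) = (1/δ) * δ := by field_simp
        _ ≤ (n:ℝ) * δ := mul_le_mul_of_nonneg_right h8 hδ.le
    have : min 1 ((n:ℝ) * δ) = 1 := min_eq_left hnδ
    exact main n τ (by rw [this]; exact hτ)
  -- assemble the conclusion
  intro τ hτ
  choose E hE using solvall τ hτ
  refine ⟨E, hE, ?_, ?_⟩
  · intro u e he
    have h9 : ‖H₁ e - H₁ (E u)‖ ≤ Γhat * ‖u - u‖ :=
      hyp τ hτ u u e (E u) he (hE u)
    simp only [sub_self, norm_zero, mul_zero] at h9
    have h10 : H₁ e = H₁ (E u) := by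
      have := norm_nonneg (H₁ e - H₁ (E u))
      have : ‖H₁ e - H₁ (E u)‖ = 0 := le_antisymm h9 this
      rwa [norm_sub_eq_zero_iff] at this
    rw [he, hE u, h10]
  · intro u₁ u₂
    exact hyp τ hτ u₁ u₂ _ _ (hE u₁) (hE u₂)
end
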